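/- Every cograph on at least 2 vertices contains a pair of vertices that are either false twins or true twins. -/

import Mathlib

/-- A cograph is a graph with no induced subgraph isomorphic to the path `P₄`. -/
def IsCograph {V : Type*} (G : SimpleGraph V) : Prop :=
  IsEmpty (SimpleGraph.pathGraph 4 ↪g G)

section Aux

open Relation

variable {V : Type*}

/-- One adjacency step inside a finite vertex set `s`. -/
def stepRel (H : SimpleGraph V) (s : Finset V) (a b : V) : Prop :=
  a ∈ s ∧ b ∈ s ∧ H.Adj a b

/-- Reachability inside a finite vertex set `s`. -/
def Rch (H : SimpleGraph V) (s : Finset V) : V → V → Prop :=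
  Relation.ReflTransGen (stepRel H s)

lemma rch_symm {H : SimpleGraph V} {s : Finset V} {a b : V}
    (h : Rch H s a b) : Rch H s b a :=
  by haveI : Std.Symm (stepRel H s) := ⟨fun _ _ h => ⟨h.2.1, h.1, h.2.2.symm⟩⟩
     exact (ReflTransGen.symmetric (r := stepRel H s)).symm _ _ h

lemma rch_mem {H : SimpleGraph V} {s : Finset V} {a b : V}
    (h : Rch H s a b) (ha : a ∈ s) : b ∈ s := by
  induction h with
  | refl => exact ha
  | tail _ h₂ _ => exact h₂.2.1

lemma rtg_closed {r : V → V → Prop} {T : Set V}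
    (hT : ∀ p ∈ T, ∀ q, r p q → q ∈ T) :
    ∀ {a b}, Relation.ReflTransGen r a b → a ∈ T → b ∈ T := by
  intro a b h ha
  induction h with
  | refl => exact ha
  | tail _ h₂ ih => exact hT _ ih _ h₂

lemma rch_eq_of_no_step {H : SimpleGraph V} {s : Finset V} {a : V}
    (h : ∀ c, ¬ stepRel H s a c) {w : V} (hr : Rch H s a w) : w = a := by
  have := rtg_closed (T := {a}) (fun p hp q hq => by
    rw [Set.mem_singleton_iff] at hp
    subst hp
    exact absurd hq (h q)) hr rfl
  exact this

lemma crossing {r : V → V → Prop} {P : V → Prop} {a b : V}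
    (h : Relation.ReflTransGen r a b) :
    P a → ¬ P b → ∃ p q, Relation.ReflTransGen r a p ∧ r p q ∧ P p ∧ ¬ P q := by
  induction h with
  | refl => exact fun ha hb => absurd ha hb
  | @tail b c h₁ h₂ ih =>
      intro ha hc
      by_cases hPb : P b
      · exact ⟨b, c, h₁, h₂, hPb, hc⟩
      · exact ih ha hPb

def p4_embed {G : SimpleGraph V} {a b c d : V}
    (hab : G.Adj a b) (hbc : G.Adj b c) (hcd : G.Adj c d)
    (hac : ¬ G.Adj a c) (had : ¬ G.Adj a d) (hbd : ¬ G.Adj b d)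
    (hnead : a ≠ d) : SimpleGraph.pathGraph 4 ↪g G := by
  have h1 : a ≠ b := hab.ne
  have h2 : b ≠ c := hbc.ne
  have h3 : c ≠ d := hcd.ne
  have h4 : a ≠ c := fun h => had (h ▸ hcd)
  have h5 : b ≠ d := fun h => had (h ▸ hab)
  have hba : G.Adj b a := hab.symm
  have hcb : G.Adj c b := hbc.symm
  have hdc : G.Adj d c := hcd.symm
  have hca : ¬ G.Adj c a := fun h => hac h.symm
  have hda : ¬ G.Adj d a := fun h => had h.symm
  have hdb : ¬ G.Adj d b := fun h => hbd h.symm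
  refine ⟨⟨![a, b, c, d], ?_⟩, ?_⟩
  · intro i j hij
    fin_cases i <;> fin_cases j <;> simp_all
  · intro i j
    change G.Adj (![a, b, c, d] i) (![a, b, c, d] j) ↔ _
    fin_cases i <;> fin_cases j <;>
      simp [SimpleGraph.pathGraph_adj, hab, hbc, hcd, hba, hcb, hdc, hac, hca,
        had, hda, hbd, hdb] <;> decide

lemma isCograph_compl {G : SimpleGraph V} (h : IsCograph G) : IsCograph Gᶜ := by
  constructor
  intro e
  refine h.elim ?_
  have key : ∀ x y : Fin 4, G.Adj (e x) (e y) ↔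
      (x ≠ y ∧ ¬ (SimpleGraph.pathGraph 4).Adj x y) := by
    intro x y
    rw [← e.map_rel_iff, SimpleGraph.compl_adj]
    constructor
    · intro hA
      refine ⟨fun hxy => ?_, fun hc => hc.2 hA⟩
      subst hxy; exact G.irrefl hA
    · rintro ⟨hxy, hc⟩
      by_contra hA
      exact hc ⟨fun h' => hxy (e.injective h'), hA⟩
  let σ : Fin 4 → Fin 4 := ![1, 3, 0, 2]
  refine ⟨⟨fun i => e (σ i), ?_⟩, ?_⟩
  · intro i j hij
    have := e.injective hij
    fin_cases i <;> fin_cases j <;> simp_all [σ]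
  · intro i j
    change G.Adj (e (σ i)) (e (σ j)) ↔ _
    rw [key]
    fin_cases i <;> fin_cases j <;>
      simp [σ, SimpleGraph.pathGraph_adj] <;> decide

lemma seinsche [DecidableEq V] :
    ∀ n : ℕ, ∀ H : SimpleGraph V, IsCograph H → ∀ s : Finset V, s.card = n → 2 ≤ s.card →
    (∃ u ∈ s, ∃ v ∈ s, u ≠ v ∧ ¬ Rch H s u v) ∨
    (∃ u ∈ s, ∃ v ∈ s, u ≠ v ∧ ¬ Rch Hᶜ s u v) := by
  intro n
  induction n using Nat.strong_induction_on with
  | _ n IH =>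
  intro H hH s hn h2
  rcases eq_or_lt_of_le h2 with h2' | h3
  · -- base: |s| = 2
    obtain ⟨a, b, hab, rfl⟩ := Finset.card_eq_two.mp h2'.symm
    by_cases hadj : H.Adj a b
    · right
      refine ⟨a, by simp, b, by simp, hab, fun hr => ?_⟩
      have := rch_eq_of_no_step (a := a) ?_ hr
      · exact hab this.symm
      · rintro c ⟨_, hc, hadjc⟩
        rcases Finset.mem_insert.mp hc with rfl | hc
        · exact Hᶜ.irrefl hadjc
        · rw [Finset.mem_singleton] at hc
          subst hc
          exact ((H.compl_adj a c).mp hadjc).2 hadj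
    · left
      refine ⟨a, by simp, b, by simp, hab, fun hr => ?_⟩
      have := rch_eq_of_no_step (a := a) ?_ hr
      · exact hab this.symm
      · rintro c ⟨_, hc, hadjc⟩
        rcases Finset.mem_insert.mp hc with rfl | hc
        · exact H.irrefl hadjc
        · rw [Finset.mem_singleton] at hc
          subst hc
          exact hadj hadjc
  · -- step: |s| ≥ 3
    obtain ⟨x, hx⟩ : s.Nonempty := Finset.card_pos.mp (by omega)
    set s' := s.erase x with hs'
    have hcard' : s'.card = s.card - 1 := Finset.card_erase_of_mem hx
    have h2' : 2 ≤ s'.card := by omega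
    have hlt : s'.card < n := by omega
    have key : ∀ K : SimpleGraph V, IsCograph K →
        (∃ u ∈ s', ∃ v ∈ s', u ≠ v ∧ ¬ Rch K s' u v) →
        (∃ u ∈ s, ∃ v ∈ s, u ≠ v ∧ ¬ Rch K s u v) ∨
        (∃ u ∈ s, ∃ v ∈ s, u ≠ v ∧ ¬ Rch Kᶜ s u v) := by
      rintro K hK ⟨u, hu, v, hv, huv, hdis⟩
      by_cases hcase : ∀ w ∈ s', ∃ a, Rch K s' w a ∧ K.Adj x a
      · by_cases hall : ∀ w ∈ s', K.Adj x w
        · -- x joined to everything : Kᶜ disconnected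
          right
          refine ⟨x, hx, u, Finset.mem_of_mem_erase hu, fun h => (Finset.mem_erase.mp hu).1 h.symm,
            fun hr => ?_⟩
          have := rch_eq_of_no_step (a := x) ?_ hr
          · exact (Finset.mem_erase.mp hu).1 this
          · rintro c ⟨_, hc, hadjc⟩
            obtain ⟨hxc, hnadj⟩ := (K.compl_adj x c).mp hadjc
            exact hnadj (hall c (Finset.mem_erase.mpr ⟨fun h => hxc h.symm, hc⟩))
        · -- some non-neighbour y of x in s' : produce a P4, contradiction
          exfalso
          push_neg at hall
          obtain ⟨y, hy, hxy⟩ := hall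
          obtain ⟨a, hya, hxa⟩ := hcase y hy
          have hc0 : ∃ c0 ∈ s', ¬ Rch K s' y c0 := by
            by_cases h : Rch K s' y u
            · exact ⟨v, hv, fun hyv => hdis ((rch_symm h).trans hyv)⟩
            · exact ⟨u, hu, h⟩
          obtain ⟨c0, hc0s, hc0⟩ := hc0
          obtain ⟨d, hc0d, hxd⟩ := hcase c0 hc0s
          obtain ⟨p, q, hap, hpq, hxp, hxq⟩ :=
            crossing (P := fun z => K.Adj x z) (rch_symm hya) hxa hxy
          have hyp : Rch K s' y p := hya.trans hap
          have hyq : Rch K s' y q := hyp.trans (ReflTransGen.single hpq)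
          have hps : p ∈ s' := rch_mem hyp hy
          have hqs : q ∈ s' := rch_mem hyq hy
          have hds : d ∈ s' := rch_mem hc0d hc0s
          have hqd : ¬ K.Adj q d := fun h =>
            hc0 ((hyq.trans (ReflTransGen.single ⟨hqs, hds, h⟩)).trans (rch_symm hc0d))
          have hpd : ¬ K.Adj p d := fun h =>
            hc0 ((hyp.trans (ReflTransGen.single ⟨hps, hds, h⟩)).trans (rch_symm hc0d))
          have hqd' : q ≠ d := fun h => hc0 ((h ▸ hyq).trans (rch_symm hc0d))
          exact hK.elim (p4_embed (hpq.2.2.symm) hxp.symm hxd (fun h => hxq h.symm) hqd hpd hqd')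
      · -- a component of s' sees no neighbour of x : K disconnected on s
        push_neg at hcase
        obtain ⟨w, hw, hno⟩ := hcase
        left
        refine ⟨w, Finset.mem_of_mem_erase hw, x, hx, (Finset.mem_erase.mp hw).1, fun hr => ?_⟩
        have hxT : Rch K s' w x := by
          refine rtg_closed (T := {z | Rch K s' w z}) ?_ hr ReflTransGen.refl
          intro p hp q hq
          by_cases hqx : q = x
          · subst hqx
            exact absurd hq.2.2.symm (hno p hp)
          · have hqs' : q ∈ s' := Finset.mem_erase.mpr ⟨hqx, hq.2.1⟩
            have hps' : p ∈ s' := rch_mem hp hw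
            exact hp.tail ⟨hps', hqs', hq.2.2⟩
        exact Finset.notMem_erase x s (rch_mem hxT hw)
    rcases IH s'.card hlt H hH s' rfl h2' with h | h
    · exact key H hH h
    · have := key Hᶜ (isCograph_compl hH) h
      simp only [compl_compl] at this
      exact this.symm

/-- Twins relative to a vertex set `s`. -/
def TwinsIn (H : SimpleGraph V) (s : Finset V) (u v : V) : Prop :=
  (¬ H.Adj u v ∧ ∀ w ∈ s, (H.Adj u w ↔ H.Adj v w)) ∨
  (H.Adj u v ∧ ∀ w ∈ s, w ≠ u → w ≠ v → (H.Adj u w ↔ H.Adj v w))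

lemma twinsIn_compl {H : SimpleGraph V} {s : Finset V} {u v : V}
    (huv : u ≠ v) (h : TwinsIn Hᶜ s u v) : TwinsIn H s u v := by
  rcases h with ⟨hn, hall⟩ | ⟨ha, hall⟩
  · right
    have hadj : H.Adj u v := by
      by_contra h'
      exact hn ((H.compl_adj u v).mpr ⟨huv, h'⟩)
    refine ⟨hadj, fun w hw hwu hwv => ?_⟩
    have h1 : u ≠ w := fun h => hwu h.symm
    have h2 : v ≠ w := fun h => hwv h.symm
    have := hall w hw
    simp only [SimpleGraph.compl_adj] at this
    tauto
  · left
    have hnadj : ¬ H.Adj u v := fun h' => ((H.compl_adj u v).mp ha).2 h'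
    refine ⟨hnadj, fun w hw => ?_⟩
    by_cases hwu : w = u
    · subst hwu
      exact ⟨fun h => absurd h (H.irrefl), fun h => absurd h.symm hnadj⟩
    by_cases hwv : w = v
    · subst hwv
      exact ⟨fun h => absurd h hnadj, fun h => absurd h (H.irrefl)⟩
    · have h1 : u ≠ w := fun h => hwu h.symm
      have h2 : v ≠ w := fun h => hwv h.symm
      have := hall w hw hwu hwv
      simp only [SimpleGraph.compl_adj] at this
      tauto

lemma twins_aux [DecidableEq V] :
    ∀ n : ℕ, ∀ H : SimpleGraph V, IsCograph H → ∀ s : Finset V, s.card = n → 2 ≤ s.card →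
    ∃ u ∈ s, ∃ v ∈ s, u ≠ v ∧ TwinsIn H s u v := by
  intro n
  induction n using Nat.strong_induction_on with
  | _ n IH =>
  intro H hH s hn h2
  classical
  rcases eq_or_lt_of_le h2 with h2' | h3
  · -- base: |s| = 2
    obtain ⟨a, b, hab, rfl⟩ := Finset.card_eq_two.mp h2'.symm
    refine ⟨a, by simp, b, by simp, hab, ?_⟩
    by_cases hadj : H.Adj a b
    · right
      refine ⟨hadj, fun w hw hwa hwb => ?_⟩
      rcases Finset.mem_insert.mp hw with rfl | hw
      · exact absurd rfl hwa
      · rw [Finset.mem_singleton] at hw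
        exact absurd hw hwb
    · left
      refine ⟨hadj, fun w hw => ?_⟩
      rcases Finset.mem_insert.mp hw with rfl | hw
      · exact ⟨fun h => absurd h (H.irrefl), fun h => absurd h.symm hadj⟩
      · rw [Finset.mem_singleton] at hw
        subst hw
        exact ⟨fun h => absurd h hadj, fun h => absurd h (H.irrefl)⟩
  · -- step: |s| ≥ 3
    have key : ∀ K : SimpleGraph V, IsCograph K →
        (∃ u ∈ s, ∃ v ∈ s, u ≠ v ∧ ¬ Rch K s u v) →
        ∃ u ∈ s, ∃ v ∈ s, u ≠ v ∧ TwinsIn K s u v := by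
      rintro K hK ⟨u, hu, v, hv, huv, hdis⟩
      set C := s.filter (fun w => Rch K s u w) with hCdef
      have huC : u ∈ C := Finset.mem_filter.mpr ⟨hu, Relation.ReflTransGen.refl⟩
      have hvC : v ∉ C := fun h => hdis (Finset.mem_filter.mp h).2
      have hCs : C ⊆ s := Finset.filter_subset _ _
      have hclosed : ∀ a ∈ C, ∀ b ∈ s, K.Adj a b → b ∈ C := by
        intro a ha b hb hab
        exact Finset.mem_filter.mpr ⟨hb, (Finset.mem_filter.mp ha).2.tail ⟨hCs ha, hb, hab⟩⟩
      by_cases hC2 : 2 ≤ C.card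
      · have hlt : C.card < n := hn ▸ Finset.card_lt_card ⟨hCs, fun h => hvC (h hv)⟩
        obtain ⟨u', hu', v', hv', hne', htw⟩ := IH C.card hlt K hK C rfl hC2
        refine ⟨u', hCs hu', v', hCs hv', hne', ?_⟩
        have hout : ∀ w ∈ s, w ∉ C → ¬ K.Adj u' w ∧ ¬ K.Adj v' w :=
          fun w hw hwC => ⟨fun h => hwC (hclosed u' hu' w hw h),
            fun h => hwC (hclosed v' hv' w hw h)⟩
        rcases htw with ⟨hn', hall⟩ | ⟨ha', hall⟩
        · left
          refine ⟨hn', fun w hw => ?_⟩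
          by_cases hwC : w ∈ C
          · exact hall w hwC
          · obtain ⟨hA, hB⟩ := hout w hw hwC
            exact ⟨fun h => absurd h hA, fun h => absurd h hB⟩
        · right
          refine ⟨ha', fun w hw hwu hwv => ?_⟩
          by_cases hwC : w ∈ C
          · exact hall w hwC hwu hwv
          · obtain ⟨hA, hB⟩ := hout w hw hwC
            exact ⟨fun h => absurd h hA, fun h => absurd h hB⟩
      · -- u is isolated in s
        have hiso : ∀ b ∈ s, ¬ K.Adj u b := by
          intro b hb hab
          have hbC : b ∈ C := hclosed u huC b hb hab
          push_neg at hC2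
          have hsub : ({u, b} : Finset V) ⊆ C := by
            intro z hz
            rcases Finset.mem_insert.mp hz with rfl | hz
            · exact huC
            · rw [Finset.mem_singleton] at hz; subst hz; exact hbC
          have := Finset.card_le_card hsub
          rw [Finset.card_insert_of_notMem (by simp [hab.ne]), Finset.card_singleton] at this
          omega
        have hu3 : 2 ≤ (s.erase u).card := by
          rw [Finset.card_erase_of_mem hu]; omega
        have hlt : (s.erase u).card < n := by
          rw [Finset.card_erase_of_mem hu]; omega
        obtain ⟨u', hu', v', hv', hne', htw⟩ := IH _ hlt K hK (s.erase u) rfl hu3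
        refine ⟨u', Finset.mem_of_mem_erase hu', v', Finset.mem_of_mem_erase hv', hne', ?_⟩
        have hu'u : ¬ K.Adj u' u := fun h => hiso u' (Finset.mem_of_mem_erase hu') h.symm
        have hv'u : ¬ K.Adj v' u := fun h => hiso v' (Finset.mem_of_mem_erase hv') h.symm
        rcases htw with ⟨hn', hall⟩ | ⟨ha', hall⟩
        · left
          refine ⟨hn', fun w hw => ?_⟩
          by_cases hwu : w = u
          · subst hwu
            exact ⟨fun h => absurd h hu'u, fun h => absurd h hv'u⟩
          · exact hall w (Finset.mem_erase.mpr ⟨hwu, hw⟩)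
        · right
          refine ⟨ha', fun w hw hwu' hwv' => ?_⟩
          by_cases hwu : w = u
          · subst hwu
            exact ⟨fun h => absurd h hu'u, fun h => absurd h hv'u⟩
          · exact hall w (Finset.mem_erase.mpr ⟨hwu, hw⟩) hwu' hwv'
    rcases seinsche n H hH s hn h2 with h | h
    · exact key H hH h
    · obtain ⟨u, hu, v, hv, hne, htw⟩ := key Hᶜ (isCograph_compl hH) h
      exact ⟨u, hu, v, hv, hne, twinsIn_compl hne htw⟩

end Aux

theorem cograph_has_twins {V : Type*} [Fintype V] (G : SimpleGraph V)
    (hG : IsCograph G) (hcard : 2 ≤ Fintype.card V) :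
    ∃ u v : V, u ≠ v ∧
      ((¬ G.Adj u v ∧ ∀ w, G.Adj u w ↔ G.Adj v w) ∨
       (G.Adj u v ∧ ∀ w, w ≠ u → w ≠ v → (G.Adj u w ↔ G.Adj v w))) := by
  classical
  have h2 : 2 ≤ (Finset.univ : Finset V).card := by
    rwa [Finset.card_univ]
  obtain ⟨u, hu, v, hv, hne, htw⟩ :=
    twins_aux (Finset.univ : Finset V).card G hG Finset.univ rfl h2
  refine ⟨u, v, hne, ?_⟩
  rcases htw with ⟨h1, h2'⟩ | ⟨h1, h2'⟩
  · exact Or.inl ⟨h1, fun w => h2' w (Finset.mem_univ w)⟩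
  · exact Or.inr ⟨h1, fun w hwu hwv => h2' w (Finset.mem_univ w) hwu hwv⟩
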